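/- arXiv:1202.3173 — 3 statements merged into one kernel-verified Lean document; each statement's English description precedes it below -/
import Mathlib

section
/- The recurrence F(n,P) = 18·(n²/(4P)) + F(n/2, P/7) with base case F(n,1) = c_s·n^{ω₀} − 6n², where ω₀ = log₂ 7, has solution F(n,P) = (c_s·n^{ω₀} − 6n²)/P for all P = 7^k and n divisible by 2^k. -/
lemma key_rpow (k : ℕ) (m : ℝ) (hm : 0 < m) :
    ((2:ℝ) ^ k * m) ^ Real.logb 2 7 = 7 ^ k * m ^ Real.logb 2 7 := by
  rw [Real.mul_rpow (by positivity) hm.le]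
  congr 1
  rw [← Real.rpow_natCast 2 k, ← Real.rpow_natCast 7 k,
    ← Real.rpow_mul (by norm_num), mul_comm,
    Real.rpow_mul (by norm_num : (0:ℝ) ≤ 2),
    Real.rpow_logb (by norm_num) (by norm_num) (by norm_num)]

/-- the recurrence F(n,P) = 18·(n²/(4P)) + F(n/2, P/7) with base case
    F(n,1) = c_s·n^{ω₀} − 6n² has solution F(n,P) = (c_s·n^{ω₀} − 6n²)/P
    for P = 7^k and n divisible by 2^k. -/
theorem F_UM_formula (c : ℝ) (F : ℝ → ℝ → ℝ)
    (hbase : ∀ n : ℝ, F n 1 = c * n ^ Real.logb 2 7 - 6 * n ^ 2)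
    (hrec : ∀ n : ℝ, ∀ k : ℕ, 0 < k →
      F n (7 ^ k) = 18 * (n ^ 2 / (4 * 7 ^ k)) + F (n / 2) (7 ^ (k - 1))) :
    ∀ (k : ℕ) (m : ℝ), 0 < m →
      F (2 ^ k * m) (7 ^ k)
        = (c * (2 ^ k * m) ^ Real.logb 2 7 - 6 * (2 ^ k * m) ^ 2) / 7 ^ k := by
  intro k
  induction k with
  | zero => intro m hm; simp [hbase]
  | succ k ih =>
    intro m hm
    rw [hrec _ (k + 1) (Nat.succ_pos k), Nat.add_sub_cancel]
    have h2 : (2:ℝ) ^ (k + 1) * m / 2 = 2 ^ k * m := by ring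
    rw [h2, ih m hm, key_rpow (k + 1) m hm, key_rpow k m hm]
    have h7 : (0:ℝ) < 7 ^ k := by positivity
    field_simp
    ring
end

section
/- Let M, n, P > 0 satisfy 3n²/P ≤ M/3, and let ℓ = max{0, ⌈log₂(4n/(P^{1/ω₀}·M^{1/2}))⌉} with ω₀ = log₂ 7. Then (M/3)·Σ_{i=0}^{ℓ−1}(1/4)^i + 7·(n/2^ℓ)²/P^{2/ω₀} ≤ (127/144)·M < M. -/
/-- memory-requirement bound for the Limited Memory scheme of CAPS.
    With 3n²/P ≤ M/3 and ℓ = max{0, ⌈log₂(4n/(P^{1/ω₀}M^{1/2}))⌉},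
    (M/3)·Σ_{i=0}^{ℓ−1}(1/4)^i + 7(n/2^ℓ)²/P^{2/ω₀} ≤ (127/144)M < M. -/
theorem mem_LM_bound (n P M : ℝ) (hn : 0 < n) (hP : 0 < P) (hM : 0 < M)
    (hmem : 3 * n ^ 2 / P ≤ M / 3)
    (ℓ : ℕ)
    (hℓ : ℓ = ⌈Real.logb 2 (4 * n /
      (P ^ ((1 : ℝ) / Real.logb 2 7) * M ^ ((1 : ℝ) / 2)))⌉₊) :
    (M / 3) * ∑ i ∈ Finset.range ℓ, ((1 : ℝ) / 4) ^ i
        + 7 * (n / 2 ^ ℓ) ^ 2 / P ^ ((2 : ℝ) / Real.logb 2 7)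
      ≤ 127 / 144 * M
    ∧ 127 / 144 * M < M := by
  set ω := Real.logb 2 7 with hω
  have hω0 : 0 < ω := Real.logb_pos (by norm_num) (by norm_num)
  have hA : (0:ℝ) < P ^ ((1:ℝ)/ω) := Real.rpow_pos_of_pos hP _
  have hB : (0:ℝ) < M ^ ((1:ℝ)/2) := Real.rpow_pos_of_pos hM _
  have hx : (0:ℝ) < 4 * n / (P ^ ((1:ℝ)/ω) * M ^ ((1:ℝ)/2)) := by positivity
  have hle : Real.logb 2 (4 * n / (P ^ ((1:ℝ)/ω) * M ^ ((1:ℝ)/2))) ≤ (ℓ:ℝ) := by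
    rw [hℓ]; exact Nat.le_ceil _
  have hpow : (0:ℝ) < 2 ^ ℓ := by positivity
  have h2 : 4 * n / (P ^ ((1:ℝ)/ω) * M ^ ((1:ℝ)/2)) ≤ (2:ℝ) ^ ℓ := by
    have := (Real.logb_le_iff_le_rpow (by norm_num) hx).mp hle
    simpa [Real.rpow_natCast] using this
  -- square identities
  have hPsq : (P ^ ((1:ℝ)/ω)) ^ 2 = P ^ ((2:ℝ)/ω) := by
    rw [← Real.rpow_natCast (P ^ ((1:ℝ)/ω)) 2, ← Real.rpow_mul hP.le]
    norm_num [div_eq_mul_inv, mul_comm]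
  have hMsq : (M ^ ((1:ℝ)/2)) ^ 2 = M := by
    rw [← Real.rpow_natCast (M ^ ((1:ℝ)/2)) 2, ← Real.rpow_mul hM.le]
    norm_num
  have hPω : (0:ℝ) < P ^ ((2:ℝ)/ω) := Real.rpow_pos_of_pos hP _
  -- 4n ≤ A·B·2^ℓ
  have h4n : 4 * n ≤ P ^ ((1:ℝ)/ω) * M ^ ((1:ℝ)/2) * 2 ^ ℓ := by
    rw [div_le_iff₀ (by positivity)] at h2
    linarith
  have hnd : n / 2 ^ ℓ ≤ P ^ ((1:ℝ)/ω) * M ^ ((1:ℝ)/2) / 4 := by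
    rw [div_le_div_iff₀ hpow (by norm_num)]
    nlinarith
  have hsq : (n / 2 ^ ℓ) ^ 2 ≤ P ^ ((2:ℝ)/ω) * M / 16 := by
    have h0 : (0:ℝ) ≤ n / 2 ^ ℓ := by positivity
    have := mul_self_le_mul_self h0 hnd
    calc (n / 2 ^ ℓ) ^ 2 = (n / 2 ^ ℓ) * (n / 2 ^ ℓ) := sq (n / 2 ^ ℓ)
      _ ≤ (P ^ ((1:ℝ)/ω) * M ^ ((1:ℝ)/2) / 4) * (P ^ ((1:ℝ)/ω) * M ^ ((1:ℝ)/2) / 4) := this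
      _ = (P ^ ((1:ℝ)/ω)) ^ 2 * (M ^ ((1:ℝ)/2)) ^ 2 / 16 := by ring
      _ = P ^ ((2:ℝ)/ω) * M / 16 := by rw [hPsq, hMsq]
  have hterm2 : 7 * (n / 2 ^ ℓ) ^ 2 / P ^ ((2:ℝ)/ω) ≤ 7 * M / 16 := by
    rw [div_le_iff₀ hPω]
    nlinarith
  have hsum : ∑ i ∈ Finset.range ℓ, ((1:ℝ)/4) ^ i ≤ 4/3 := by
    rw [geom_sum_eq (by norm_num : ((1:ℝ)/4) ≠ 1)]
    have : (0:ℝ) ≤ ((1:ℝ)/4) ^ ℓ := by positivity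
    rw [div_le_iff_of_neg (by norm_num : ((1:ℝ)/4 - 1) < 0)]
    linarith
  constructor
  · have h1 : M / 3 * ∑ i ∈ Finset.range ℓ, ((1:ℝ)/4) ^ i ≤ M / 3 * (4/3) :=
      mul_le_mul_of_nonneg_left hsum (by positivity)
    linarith
  · linarith
end

section
/- For the Strassen-2D algorithm taking ℓ Strassen DFS steps on top of a 2D classical algorithm, the bandwidth cost satisfies BW(n,P,ℓ) = 7^ℓ·BW_2D(n/2^ℓ, P) = (7/4)^ℓ·Θ(n²/P^{1/2}) and the latency cost satisfies L(n,P,ℓ) = 7^ℓ·Θ(P^{1/2}), given BW_2D(m,P) = Θ(m²/P^{1/2}) and L_2D(m,P) = Θ(P^{1/2}). -/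
/-- the Strassen-2D algorithm with ℓ DFS Strassen steps on top of a 2D
    algorithm satisfies BW(n,P,ℓ) = 7^ℓ·BW_2D(n/2^ℓ,P) = (7/4)^ℓ·BW_2D(n,P) and
    L(n,P,ℓ) = 7^ℓ·L_2D(n,P). -/
theorem strassen2D_costs (P : ℝ) (BW2D L2D : ℝ → ℝ → ℝ) (BW L : ℝ → ℝ → ℕ → ℝ)
    (hBW0 : ∀ n : ℝ, BW n P 0 = BW2D n P)
    (hBWrec : ∀ (n : ℝ) (ℓ : ℕ), BW n P (ℓ + 1) = 7 * BW (n / 2) P ℓ)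
    (hBW2Dhalf : ∀ n : ℝ, BW2D (n / 2) P = BW2D n P / 4)
    (hL0 : ∀ n : ℝ, L n P 0 = L2D n P)
    (hLrec : ∀ (n : ℝ) (ℓ : ℕ), L n P (ℓ + 1) = 7 * L (n / 2) P ℓ)
    (hL2Dhalf : ∀ n : ℝ, L2D (n / 2) P = L2D n P) :
    ∀ (n : ℝ) (ℓ : ℕ),
      BW n P ℓ = 7 ^ ℓ * BW2D (n / 2 ^ ℓ) P
      ∧ BW n P ℓ = ((7 : ℝ) / 4) ^ ℓ * BW2D n P
      ∧ L n P ℓ = 7 ^ ℓ * L2D n P := by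
  intro n ℓ
  induction ℓ generalizing n with
  | zero => simp [hBW0, hL0]
  | succ k ih =>
    obtain ⟨ih1, ih2, ih3⟩ := ih (n / 2)
    refine ⟨?_, ?_, ?_⟩
    · rw [hBWrec, ih1, pow_succ]
      ring_nf
    · rw [hBWrec, ih2, hBW2Dhalf, pow_succ]
      ring
    · rw [hLrec, ih3, hL2Dhalf, pow_succ]
      ring
end
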